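/- Let β ∈ (0,1], c ≥ 0 and z ∈ ℝ with |z| ≤ 1. Then ∑_{r=0}^{∞} z^r · ( ∑_{x=r}^{∞} (-1)^{x-r}·C(x,r)·c^x/Γ(βx+1) ) = E_{β,1}(-c(1-z)), where C(x,r) is the binomial coefficient and E_{β,1}(w) = ∑_{x=0}^{∞} w^x/Γ(βx+1) is the Mittag-Leffler function. Moreover all series involved converge absolutely. -/

import Mathlib

open scoped BigOperators

lemma ml_summable {β : ℝ} (hβ : 0 < β) {A : ℝ} (hA : 0 ≤ A) :
    Summable (fun x : ℕ => A ^ x / Real.Gamma (β * x + 1)) := by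
  obtain ⟨N, hN⟩ := exists_nat_ge (1 / β)
  have hN1 : 1 ≤ β * N := by
    rw [div_le_iff₀ hβ] at hN
    nlinarith
  set D : ℝ := 2 * max 1 A with hD
  have hD1 : 1 ≤ D := by
    have := le_max_left 1 A
    simp only [hD]; nlinarith
  have hD0 : 0 ≤ D := by linarith
  set E : ℝ := D ^ N with hEdef
  have hE1 : 1 ≤ E := one_le_pow₀ hD1
  have hE0 : 0 < E := by linarith
  -- factorial eventually dominates E^(m+1)
  obtain ⟨M, hM⟩ : ∃ M : ℕ, ∀ m ≥ M, E ^ (m + 1) ≤ (Nat.factorial m : ℝ) := by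
    have h0 := (FloorSemiring.tendsto_pow_div_factorial_atTop (K := ℝ) E).eventually_le_const
      (show (0:ℝ) < 1/E by positivity)
    obtain ⟨M, hM⟩ := h0.exists_forall_of_atTop
    refine ⟨M, fun m hm => ?_⟩
    have h1 := hM m hm
    have hfpos : (0:ℝ) < (Nat.factorial m : ℝ) := by positivity
    rw [div_le_div_iff₀ hfpos hE0] at h1
    calc E ^ (m+1) = E ^ m * E := by ring
    _ ≤ 1 * (Nat.factorial m : ℝ) := by linarith
    _ = (Nat.factorial m : ℝ) := one_mul _
  -- eventual bound by (1/2)^x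
  have hgeo : Summable (fun x : ℕ => (1/2 : ℝ) ^ x) :=
    summable_geometric_of_lt_one (by norm_num) (by norm_num)
  apply summable_of_isBigO_nat hgeo
  apply Asymptotics.IsBigO.of_bound 1
  have hev : ∀ᶠ x : ℕ in Filter.atTop, (M + 2 : ℝ) ≤ β * x := by
    have : Filter.Tendsto (fun x : ℕ => β * x) Filter.atTop Filter.atTop :=
      (tendsto_natCast_atTop_atTop (R := ℝ)).const_mul_atTop hβ
    exact this.eventually_ge_atTop _
  filter_upwards [hev] with x hx
  set m := ⌊β * x⌋₊ with hm
  have hβx0 : 0 ≤ β * x := by positivity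
  have hmge : M + 2 ≤ m := by
    have : ((M + 2 : ℕ) : ℝ) ≤ β * x := by push_cast; linarith
    exact Nat.le_floor this
  have hfloor_le : (m : ℝ) ≤ β * x := Nat.floor_le hβx0
  have hlt : β * x < m + 1 := Nat.lt_floor_add_one _
  have hΓpos : 0 < Real.Gamma (β * x + 1) := Real.Gamma_pos_of_pos (by linarith)
  -- Γ(βx+1) ≥ m!
  have hmono : (Nat.factorial m : ℝ) ≤ Real.Gamma (β * x + 1) := by
    have h2 : (2:ℝ) ≤ (m:ℝ) + 1 := by
      have : (1:ℕ) ≤ m := by omega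
      exact_mod_cast by exact_mod_cast Nat.succ_le_succ this
    have := Real.Gamma_strictMonoOn_Ici.monotoneOn
      (Set.mem_Ici.mpr h2) (Set.mem_Ici.mpr (by linarith : (2:ℝ) ≤ β * x + 1))
      (by linarith : (m:ℝ) + 1 ≤ β * x + 1)
    rwa [Real.Gamma_nat_eq_factorial] at this
  -- D^x ≤ E^(m+1)
  have hxle : x ≤ N * (m + 1) := by
    have h1 : (x : ℝ) ≤ β * x * N := by nlinarith [Nat.cast_nonneg (α := ℝ) x]
    have h2 : (x : ℝ) < (N : ℝ) * ((m : ℝ) + 1) := by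
      calc (x:ℝ) ≤ β * x * N := h1
      _ < ((m:ℝ)+1) * N := by
          rcases Nat.eq_zero_or_pos N with h | h
          · subst h; simp at hN1; linarith
          · have : (0:ℝ) < N := by exact_mod_cast h
            nlinarith
      _ = (N:ℝ) * ((m:ℝ)+1) := by ring
    have : (x : ℝ) < ((N * (m+1) : ℕ) : ℝ) := by push_cast; linarith
    exact_mod_cast this.le
  have hDx : D ^ x ≤ E ^ (m + 1) := by
    calc D ^ x ≤ D ^ (N * (m+1)) := pow_le_pow_right₀ hD1 hxle
    _ = (D ^ N) ^ (m+1) := by rw [← pow_mul]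
    _ = E ^ (m+1) := rfl
  have hkey : (2 * A) ^ x ≤ Real.Gamma (β * x + 1) := by
    calc (2*A) ^ x ≤ D ^ x := by
          apply pow_le_pow_left₀ (by linarith) ?_ x
          simp only [hD]
          have := le_max_right 1 A
          linarith
    _ ≤ E ^ (m+1) := hDx
    _ ≤ (Nat.factorial m : ℝ) := hM m (by omega)
    _ ≤ _ := hmono
  rw [Real.norm_eq_abs, Real.norm_eq_abs, one_mul]
  have hterm0 : 0 ≤ A ^ x / Real.Gamma (β * x + 1) := by positivity
  rw [abs_of_nonneg hterm0, abs_of_nonneg (by positivity : (0:ℝ) ≤ (1/2:ℝ)^x)]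
  rw [div_le_iff₀ hΓpos]
  calc A ^ x = (1/2:ℝ)^x * (2*A)^x := by
        rw [mul_pow, ← mul_assoc, ← mul_pow]; norm_num
  _ ≤ (1/2:ℝ)^x * Real.Gamma (β * x + 1) :=
      mul_le_mul_of_nonneg_left hkey (by positivity)

theorem tfpp_pgf (β : ℝ) (hβ0 : 0 < β) (hβ1 : β ≤ 1) (c : ℝ) (hc : 0 ≤ c)
    (z : ℝ) (hz : |z| ≤ 1) :
    (∀ r : ℕ, Summable (fun x : ℕ =>
        if r ≤ x then (-1 : ℝ) ^ (x - r) * (Nat.choose x r : ℝ) * c ^ x /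
          Real.Gamma (β * x + 1) else 0)) ∧
    Summable (fun r : ℕ => z ^ r * ∑' x : ℕ,
        (if r ≤ x then (-1 : ℝ) ^ (x - r) * (Nat.choose x r : ℝ) * c ^ x /
          Real.Gamma (β * x + 1) else 0)) ∧
    Summable (fun x : ℕ => (-c * (1 - z)) ^ x / Real.Gamma (β * x + 1)) ∧
    (∑' r : ℕ, z ^ r * ∑' x : ℕ,
        (if r ≤ x then (-1 : ℝ) ^ (x - r) * (Nat.choose x r : ℝ) * c ^ x /
          Real.Gamma (β * x + 1) else 0)) =
      ∑' x : ℕ, (-c * (1 - z)) ^ x / Real.Gamma (β * x + 1) := by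
  have hΓpos : ∀ x : ℕ, 0 < Real.Gamma (β * x + 1) := fun x =>
    Real.Gamma_pos_of_pos (by positivity)
  set a : ℕ → ℕ → ℝ := fun r x =>
    if r ≤ x then (-1 : ℝ) ^ (x - r) * (Nat.choose x r : ℝ) * c ^ x /
      Real.Gamma (β * x + 1) else 0 with ha
  have habs : ∀ r x : ℕ, |a r x| =
      if r ≤ x then (Nat.choose x r : ℝ) * c ^ x / Real.Gamma (β * x + 1) else 0 := by
    intro r x
    by_cases h : r ≤ x
    · simp only [ha, if_pos h, abs_div, abs_mul, abs_pow, abs_neg, abs_one, one_pow, one_mul,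
        Nat.abs_cast, abs_of_nonneg hc, abs_of_pos (hΓpos x)]
    · simp [ha, if_neg h]
  -- claim 1
  have claim1 : ∀ r : ℕ, Summable (fun x : ℕ => a r x) := by
    intro r
    rw [← summable_abs_iff]
    refine Summable.of_nonneg_of_le (fun x => abs_nonneg _) ?_
      (ml_summable hβ0 (show (0:ℝ) ≤ 2 * c by linarith))
    intro x
    rw [habs]
    by_cases h : r ≤ x
    · rw [if_pos h, div_le_div_iff_of_pos_right (hΓpos x)]
      calc (Nat.choose x r : ℝ) * c ^ x ≤ (2 ^ x : ℝ) * c ^ x := by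
            apply mul_le_mul_of_nonneg_right _ (by positivity)
            have h1 : x.choose r ≤ ∑ m ∈ Finset.range (x + 1), x.choose m :=
              Finset.single_le_sum (fun i _ => Nat.zero_le _)
                (Finset.mem_range.mpr (Nat.lt_succ_of_le h))
            rw [Nat.sum_range_choose] at h1
            exact_mod_cast h1
      _ = (2 * c) ^ x := by rw [mul_pow]
    · rw [if_neg h]; positivity
  -- the double-indexed function, pairs (x, r)
  set f : ℕ × ℕ → ℝ := fun p => z ^ p.2 * a p.2 p.1 with hf
  have hz0 : 0 ≤ |z| := abs_nonneg z
  have hsupp : ∀ x r : ℕ, r ∉ Finset.range (x + 1) → f (x, r) = 0 := by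
    intro x r hr
    have : ¬ r ≤ x := by simpa [Nat.lt_succ_iff] using hr
    simp [hf, ha, this]
  have hsuppabs : ∀ x r : ℕ, r ∉ Finset.range (x + 1) → |f (x, r)| = 0 := by
    intro x r hr; rw [hsupp x r hr, abs_zero]
  have habs_sum : ∀ x : ℕ, ∑' r : ℕ, |f (x, r)| =
      ((|z| + 1) * c) ^ x / Real.Gamma (β * x + 1) := by
    intro x
    rw [tsum_eq_sum (hsuppabs x)]
    have : ∀ r ∈ Finset.range (x + 1), |f (x, r)| =
        |z| ^ r * 1 ^ (x - r) * (Nat.choose x r : ℝ) * (c ^ x / Real.Gamma (β * x + 1)) := by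
      intro r hr
      have h : r ≤ x := Nat.lt_succ_iff.mp (Finset.mem_range.mp hr)
      rw [hf]
      simp only [abs_mul, abs_pow, habs, if_pos h, one_pow, one_mul]
      field_simp
    rw [Finset.sum_congr rfl this, ← Finset.sum_mul, ← add_pow]
    rw [mul_pow, mul_div_assoc]
  have habsf : Summable (fun p : ℕ × ℕ => |f p|) := by
    rw [summable_prod_of_nonneg (fun p => abs_nonneg _)]
    constructor
    · intro x
      exact summable_of_ne_finset_zero (s := Finset.range (x + 1)) (hsuppabs x)
    · exact Summable.congr (ml_summable hβ0 (A := (|z| + 1) * c) (by positivity))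
        (fun x => (habs_sum x).symm)
  have hfs : Summable f := summable_abs_iff.mp habsf
  have hfs' : Summable (fun q : ℕ × ℕ => f q.swap) := hfs.prod_symm
  -- claim 3
  have claim3 : Summable (fun x : ℕ => (-c * (1 - z)) ^ x / Real.Gamma (β * x + 1)) := by
    rw [← summable_abs_iff]
    refine Summable.of_nonneg_of_le (fun x => abs_nonneg _) ?_
      (ml_summable hβ0 (show (0:ℝ) ≤ 2 * c by linarith))
    intro x
    rw [abs_div, abs_of_pos (hΓpos x), abs_pow]
    rw [div_le_div_iff_of_pos_right (hΓpos x)]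
    apply pow_le_pow_left₀ (abs_nonneg _) _ x
    rw [abs_mul, abs_neg, abs_of_nonneg hc]
    have h1 : |1 - z| ≤ 2 := by
      calc |1 - z| ≤ |(1:ℝ)| + |z| := abs_sub _ _
      _ ≤ 2 := by rw [abs_one]; linarith
    nlinarith [abs_nonneg (1 - z)]
  -- claim 2 via fiberwise sums of the swapped function
  have hslice : ∀ r : ℕ, Summable (fun x : ℕ => f (x, r)) := by
    intro r
    exact (hfs'.prod_factor r).congr (fun x => rfl)
  have hhs : HasSum (fun r : ℕ => ∑' x : ℕ, f (x, r)) (∑' q : ℕ × ℕ, f q.swap) :=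
    hfs'.hasSum.prod_fiberwise (fun r => (hfs'.prod_factor r).hasSum)
  have hkey : ∀ r : ℕ, ∑' x : ℕ, f (x, r) = z ^ r * ∑' x : ℕ, a r x := by
    intro r
    exact tsum_mul_left (a := z ^ r) (f := fun x => a r x)
  have claim2 : Summable (fun r : ℕ => z ^ r * ∑' x : ℕ, a r x) := by
    refine hhs.summable.congr (fun r => ?_)
    exact hkey r
  refine ⟨claim1, claim2, claim3, ?_⟩
  -- the equality
  have e1 : (∑' r : ℕ, z ^ r * ∑' x : ℕ, a r x) = ∑' q : ℕ × ℕ, f q.swap := by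
    rw [← hhs.tsum_eq]
    exact tsum_congr (fun r => (hkey r).symm)
  have e2 : (∑' q : ℕ × ℕ, f q.swap) = ∑' p : ℕ × ℕ, f p :=
    (Equiv.prodComm ℕ ℕ).tsum_eq f
  have e3 : (∑' p : ℕ × ℕ, f p) = ∑' x : ℕ, ∑' r : ℕ, f (x, r) := Summable.tsum_prod hfs
  have e4 : ∀ x : ℕ, (∑' r : ℕ, f (x, r)) = (-c * (1 - z)) ^ x / Real.Gamma (β * x + 1) := by
    intro x
    rw [tsum_eq_sum (hsupp x)]
    have : ∀ r ∈ Finset.range (x + 1), f (x, r) =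
        z ^ r * (-1 : ℝ) ^ (x - r) * (Nat.choose x r : ℝ) * (c ^ x / Real.Gamma (β * x + 1)) := by
      intro r hr
      have h : r ≤ x := Nat.lt_succ_iff.mp (Finset.mem_range.mp hr)
      simp only [hf, ha, if_pos h]
      ring
    rw [Finset.sum_congr rfl this, ← Finset.sum_mul, ← add_pow]
    rw [show (-c * (1 - z)) = (z + -1) * c by ring, mul_pow, mul_div_assoc]
  rw [e1, e2, e3]
  exact tsum_congr e4
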